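/- Exchange is admissible in the multimodal natural deduction system: if Γ, φ@μ, ψ@ν, Δ ⊢ C @ p is derivable, then Γ, ψ@ν, φ@μ, Δ ⊢ C @ p is derivable. -/

import Mathlib

/-!
Multimodal intuitionistic logic (MTT's logical fragment), parametrized by a
mode theory, i.e. a strict 2-category `Md`: objects are modes, 1-cells are
modalities, 2-cells are transformations.
-/

open CategoryTheory

universe w v u

/-- Well-formed formulas of the multimodal logic, indexed by their mode. -/
inductive Fm (Md : Type u) [Bicategory.{w, v, u} Md] : Md → Type (max u v) where
  | pvar {m : Md} (i : ℕ) : Fm Md m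
  | tru {m : Md} : Fm Md m
  | fls {m : Md} : Fm Md m
  | conj {m : Md} : Fm Md m → Fm Md m → Fm Md m
  | disj {m : Md} : Fm Md m → Fm Md m → Fm Md m
  | impl {n m : Md} (μ : n ⟶ m) : Fm Md n → Fm Md m → Fm Md m
  | mod {n m : Md} (μ : n ⟶ m) : Fm Md n → Fm Md m

/-- (Pre-)contexts: `Cx Md a m` is a context whose base mode is `a` and whose
final (current) mode is `m`.  Extension tags a formula with a modality; a lock
`Γ,🔒_μ` for `μ : n ⟶ m` transports a context at mode `m` to one at mode `n`. -/
inductive Cx (Md : Type u) [Bicategory.{w, v, u} Md] : Md → Md → Type (max u v) where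
  | nil {m : Md} : Cx Md m m
  | ext {a n m : Md} : Cx Md a m → (n ⟶ m) → Fm Md n → Cx Md a m
  | lock {a n m : Md} : Cx Md a m → (n ⟶ m) → Cx Md a n

variable {Md : Type u} [Bicategory.{w, v, u} Md]

namespace Cx

/-- Concatenation of contexts: append the entries of the second to the first. -/
def append {a : Md} : {m p : Md} → Cx Md a m → Cx Md m p → Cx Md a p
  | _, _, Γ, .nil => Γ
  | _, _, Γ, .ext Δ μ φ => .ext (Γ.append Δ) μ φ
  | _, _, Γ, .lock Δ μ => .lock (Γ.append Δ) μ

/-- `locks Γ` is the composite of all the lock modalities occurring in `Γ`: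
`locks(·) = 1`, `locks(Γ, φ@μ) = locks(Γ)`, `locks(Γ,🔒_μ) = locks(Γ) ∘ μ`. -/
def locks : {a m : Md} → Cx Md a m → (m ⟶ a)
  | _, _, .nil => 𝟙 _
  | _, _, .ext Γ _ _ => Γ.locks
  | _, _, .lock Γ μ => μ ≫ Γ.locks

end Cx

/-- The identifications of contexts: the congruence generated by
`Γ,🔒_{1_m} = Γ` and `Γ,🔒_μ,🔒_ν = Γ,🔒_{μ∘ν}`. -/
inductive CxEq : {a m : Md} → Cx Md a m → Cx Md a m → Prop where
  | refl {a m : Md} (Γ : Cx Md a m) : CxEq Γ Γ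
  | symm {a m : Md} {Γ Δ : Cx Md a m} : CxEq Γ Δ → CxEq Δ Γ
  | trans {a m : Md} {Γ Δ Θ : Cx Md a m} : CxEq Γ Δ → CxEq Δ Θ → CxEq Γ Θ
  | ext {a n m : Md} {Γ Δ : Cx Md a m} (μ : n ⟶ m) (φ : Fm Md n) :
      CxEq Γ Δ → CxEq (Γ.ext μ φ) (Δ.ext μ φ)
  | lock {a n m : Md} {Γ Δ : Cx Md a m} (μ : n ⟶ m) :
      CxEq Γ Δ → CxEq (Γ.lock μ) (Δ.lock μ)
  | lock_id {a m : Md} (Γ : Cx Md a m) : CxEq (Γ.lock (𝟙 m)) Γ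
  | lock_comp {a o n m : Md} (Γ : Cx Md a m) (μ : n ⟶ m) (ν : o ⟶ n) :
      CxEq ((Γ.lock μ).lock ν) (Γ.lock (ν ≫ μ))

/-- The natural deduction system of the multimodal logic: `Der Γ φ` means
`Γ ⊢ φ @ m`.  Contexts are identified up to `CxEq` (rule `conv`). -/
inductive Der : {a m : Md} → Cx Md a m → Fm Md m → Prop where
  /-- Variable rule: from `μ : n ⟶ m` and a transformation `α : μ ⇒ locks(Δ)`
  infer `Γ, φ@μ, Δ ⊢ φ @ n`. -/
  | var {a m n : Md} (Γ : Cx Md a m) (μ : n ⟶ m) (φ : Fm Md n) (Δ : Cx Md m n)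
      (α : μ ⟶ Δ.locks) : Der ((Γ.ext μ φ).append Δ) φ
  | truI {a m : Md} (Γ : Cx Md a m) : Der Γ .tru
  | flsE {a m : Md} {Γ : Cx Md a m} {φ : Fm Md m} : Der Γ .fls → Der Γ φ
  | conjI {a m : Md} {Γ : Cx Md a m} {φ ψ : Fm Md m} :
      Der Γ φ → Der Γ ψ → Der Γ (φ.conj ψ)
  | conjE₁ {a m : Md} {Γ : Cx Md a m} {φ ψ : Fm Md m} : Der Γ (φ.conj ψ) → Der Γ φ
  | conjE₂ {a m : Md} {Γ : Cx Md a m} {φ ψ : Fm Md m} : Der Γ (φ.conj ψ) → Der Γ ψ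
  | disjI₁ {a m : Md} {Γ : Cx Md a m} {φ ψ : Fm Md m} : Der Γ φ → Der Γ (φ.disj ψ)
  | disjI₂ {a m : Md} {Γ : Cx Md a m} {φ ψ : Fm Md m} : Der Γ ψ → Der Γ (φ.disj ψ)
  | disjE {a m : Md} {Γ : Cx Md a m} {φ ψ χ : Fm Md m} :
      Der Γ (φ.disj ψ) → Der (Γ.ext (𝟙 m) φ) χ → Der (Γ.ext (𝟙 m) ψ) χ → Der Γ χ
  /-- Implication introduction. -/
  | implI {a n m : Md} {Γ : Cx Md a m} {μ : n ⟶ m} {φ : Fm Md n} {ψ : Fm Md m} :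
      Der (Γ.ext μ φ) ψ → Der Γ (.impl μ φ ψ)
  /-- Modal modus ponens. -/
  | implE {a n m : Md} {Γ : Cx Md a m} {μ : n ⟶ m} {φ : Fm Md n} {ψ : Fm Md m} :
      Der Γ (.impl μ φ ψ) → Der (Γ.lock μ) φ → Der Γ ψ
  /-- Modal introduction. -/
  | modI {a n m : Md} {Γ : Cx Md a m} {μ : n ⟶ m} {φ : Fm Md n} :
      Der (Γ.lock μ) φ → Der Γ (.mod μ φ)
  /-- Modal elimination. -/
  | modE {a o n m : Md} {Γ : Cx Md a m} {ν : o ⟶ n} {μ : n ⟶ m} {φ : Fm Md o}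
      {ψ : Fm Md m} :
      Der (Γ.lock μ) (.mod ν φ) → Der (Γ.ext (ν ≫ μ) φ) ψ → Der Γ ψ
  /-- Contexts are identified up to `CxEq`. -/
  | conv {a m : Md} {Γ Δ : Cx Md a m} {φ : Fm Md m} : CxEq Γ Δ → Der Γ φ → Der Δ φ


namespace Cx

@[simp] theorem append_nil {a m : Md} (Γ : Cx Md a m) : Γ.append .nil = Γ := by
  simp [Cx.append]

@[simp] theorem append_ext {a m p n : Md} (Γ : Cx Md a m) (Δ : Cx Md m p) (μ : n ⟶ p)
    (φ : Fm Md n) : Γ.append (Δ.ext μ φ) = (Γ.append Δ).ext μ φ := by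
  simp [Cx.append]

@[simp] theorem append_lock {a m p n : Md} (Γ : Cx Md a m) (Δ : Cx Md m p) (μ : n ⟶ p) :
    Γ.append (Δ.lock μ) = (Γ.append Δ).lock μ := by
  simp [Cx.append]

@[simp] theorem locks_nil {m : Md} : (Cx.nil : Cx Md m m).locks = 𝟙 m := by
  simp [Cx.locks]

@[simp] theorem locks_ext {a m n : Md} (Γ : Cx Md a m) (μ : n ⟶ m) (φ : Fm Md n) :
    (Γ.ext μ φ).locks = Γ.locks := by
  simp [Cx.locks]

@[simp] theorem locks_lock {a m n : Md} (Γ : Cx Md a m) (μ : n ⟶ m) :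
    (Γ.lock μ).locks = μ ≫ Γ.locks := by
  simp [Cx.locks]

theorem append_assoc : ∀ {a m p q : Md} (Γ : Cx Md a m) (Δ : Cx Md m p) (E : Cx Md p q),
    (Γ.append Δ).append E = Γ.append (Δ.append E)
  | _, _, _, _, _, _, .nil => by simp
  | _, _, _, _, Γ, Δ, .ext E μ φ => by simp [append_assoc Γ Δ E]
  | _, _, _, _, Γ, Δ, .lock E μ => by simp [append_assoc Γ Δ E]

theorem locks_append [Bicategory.Strict Md] :
    ∀ {a m p : Md} (Γ : Cx Md a m) (Δ : Cx Md m p),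
    (Γ.append Δ).locks = Δ.locks ≫ Γ.locks
  | _, _, _, Γ, .nil => by simp
  | _, _, _, Γ, .ext Δ μ φ => by simp [locks_append Γ Δ]
  | _, _, _, Γ, .lock Δ μ => by simp [locks_append Γ Δ]

/-- Split an equality of appended contexts. -/
theorem split : ∀ {a m m' p : Md} (X : Cx Md a m) (Y : Cx Md a m')
    (Δ₀ : Cx Md m p) (Δ : Cx Md m' p), X.append Δ₀ = Y.append Δ →
    (∃ (Z : Cx Md m' m), X = Y.append Z ∧ Δ = Z.append Δ₀) ∨
    (∃ (Z : Cx Md m m'), Y = X.append Z ∧ Δ₀ = Z.append Δ)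
  | _, _, _, _, X, Y, Δ₀, .nil, h => Or.inr ⟨Δ₀, by simpa using h.symm, by simp⟩
  | _, _, _, _, X, Y, .nil, .ext Δ ρ χ, h => Or.inl ⟨Δ.ext ρ χ, by simpa using h, by simp⟩
  | _, _, _, _, X, Y, .ext Δ₀ ρ₀ χ₀, .ext Δ ρ χ, h => by
      rw [append_ext, append_ext] at h
      injection h with h1 h2 h3 h4 h5
      subst h1
      cases eq_of_heq h4; cases eq_of_heq h5
      rcases split X Y Δ₀ Δ h3 with ⟨Z, h5, h6⟩ | ⟨Z, h5, h6⟩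
      · exact Or.inl ⟨Z, h5, by simp [h6]⟩
      · exact Or.inr ⟨Z, h5, by simp [h6]⟩
  | _, _, _, _, X, Y, .lock Δ₀ κ, .ext Δ ρ χ, h => by
      rw [append_lock, append_ext] at h
      cases h
  | _, _, _, _, X, Y, .nil, .lock Δ ρ, h => Or.inl ⟨Δ.lock ρ, by simpa using h, by simp⟩
  | _, _, _, _, X, Y, .ext Δ₀ ρ₀ χ₀, .lock Δ ρ, h => by
      rw [append_ext, append_lock] at h
      cases h
  | _, _, _, _, X, Y, .lock Δ₀ κ₀, .lock Δ ρ, h => by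
      rw [append_lock, append_lock] at h
      injection h with h1 h2 h3 h4
      subst h2
      cases eq_of_heq h4
      rcases split X Y Δ₀ Δ (eq_of_heq h3) with ⟨Z, h5, h6⟩ | ⟨Z, h5, h6⟩
      · exact Or.inl ⟨Z, h5, by simp [h6]⟩
      · exact Or.inr ⟨Z, h5, by simp [h6]⟩

end Cx

section Decomp

variable [Bicategory.Strict Md]

/-- `DD A B`: every decomposition of `A` around a hypothesis entry transports to `B`,
with a `CxEq`-related prefix and a tail with the same composite of locks. -/
def DD {a p : Md} (A B : Cx Md a p) : Prop :=
  ∀ {n₀ m₀ : Md} (Γ₀ : Cx Md a m₀) (μ₀ : n₀ ⟶ m₀) (φ₀ : Fm Md n₀) (Δ₀ : Cx Md m₀ p),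
    A = (Γ₀.ext μ₀ φ₀).append Δ₀ →
    ∃ (Γ' : Cx Md a m₀) (Δ' : Cx Md m₀ p),
      B = (Γ'.ext μ₀ φ₀).append Δ' ∧ CxEq Γ₀ Γ' ∧ Δ₀.locks = Δ'.locks

theorem DD.id {a p : Md} {A : Cx Md a p} : DD A A :=
  fun Γ₀ μ₀ φ₀ Δ₀ hA => ⟨Γ₀, Δ₀, hA, CxEq.refl _, Eq.refl _⟩

theorem DD.comp {a p : Md} {A B C : Cx Md a p} (d1 : DD A B) (d2 : DD B C) : DD A C := by
  intro n₀ m₀ Γ₀ μ₀ φ₀ Δ₀ hA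
  obtain ⟨Γ', Δ', hB, hcx, hl⟩ := d1 Γ₀ μ₀ φ₀ Δ₀ hA
  obtain ⟨Γ'', Δ'', hC, hcx', hl'⟩ := d2 Γ' μ₀ φ₀ Δ' hB
  exact ⟨Γ'', Δ'', hC, hcx.trans hcx', hl.trans hl'⟩

theorem DD.exten {a m n : Md} {Γ Δ : Cx Md a m} (hcx : CxEq Γ Δ) (d : DD Γ Δ)
    (μ : n ⟶ m) (φ : Fm Md n) : DD (Γ.ext μ φ) (Δ.ext μ φ) := by
  intro n₀ m₀ Γ₀ μ₀ φ₀ Δ₀ hA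
  cases Δ₀ with
  | nil =>
      rw [Cx.append_nil] at hA
      injection hA with h1 h2 h3 h4 h5
      subst h1
      cases eq_of_heq h4; cases eq_of_heq h5; cases h3
      exact ⟨Δ, .nil, by simp, hcx, Eq.refl _⟩
  | ext Δ₁ ρ χ =>
      rw [Cx.append_ext] at hA
      injection hA with h1 h2 h3 h4 h5
      subst h1
      cases eq_of_heq h4; cases eq_of_heq h5
      obtain ⟨Γ', Δ', hB, hcx', hl⟩ := d Γ₀ μ₀ φ₀ Δ₁ h3
      exact ⟨Γ', Δ'.ext μ φ, by simp [hB], hcx', by simpa using hl⟩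
  | lock Δ₁ ρ =>
      rw [Cx.append_lock] at hA
      cases hA

theorem DD.locken {a m n : Md} {Γ Δ : Cx Md a m} (d : DD Γ Δ) (μ : n ⟶ m) :
    DD (Γ.lock μ) (Δ.lock μ) := by
  intro n₀ m₀ Γ₀ μ₀ φ₀ Δ₀ hA
  cases Δ₀ with
  | nil =>
      rw [Cx.append_nil] at hA
      cases hA
  | ext Δ₁ ρ χ =>
      rw [Cx.append_ext] at hA
      cases hA
  | lock Δ₁ ρ =>
      rw [Cx.append_lock] at hA
      injection hA with h1 h2 h3 h4
      subst h2
      cases eq_of_heq h4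
      obtain ⟨Γ', Δ', hB, hcx', hl⟩ := d Γ₀ μ₀ φ₀ Δ₁ (eq_of_heq h3)
      exact ⟨Γ', Δ'.lock μ, by simp [hB], hcx', by simp [hl]⟩

theorem decomp {a p : Md} {A B : Cx Md a p} (h : CxEq A B) : DD A B ∧ DD B A := by
  induction h with
  | refl Γ => exact ⟨DD.id, DD.id⟩
  | symm _ ih => exact ⟨ih.2, ih.1⟩
  | trans _ _ ih1 ih2 => exact ⟨DD.comp ih1.1 ih2.1, DD.comp ih2.2 ih1.2⟩
  | ext μ φ hΓΔ ih => exact ⟨DD.exten hΓΔ ih.1 μ φ, DD.exten hΓΔ.symm ih.2 μ φ⟩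
  | lock μ _ ih => exact ⟨DD.locken ih.1 μ, DD.locken ih.2 μ⟩
  | lock_id Γ =>
      constructor
      · intro n₀ m₀ Γ₀ μ₀ φ₀ Δ₀ hA
        cases Δ₀ with
        | nil => rw [Cx.append_nil] at hA; cases hA
        | ext Δ₁ ρ χ => rw [Cx.append_ext] at hA; cases hA
        | lock Δ₁ ρ =>
            rw [Cx.append_lock] at hA
            injection hA with h1 h2 h3 h4
            subst h2
            cases eq_of_heq h4
            exact ⟨Γ₀, Δ₁, eq_of_heq h3, CxEq.refl _, by simp⟩
      · intro n₀ m₀ Γ₀ μ₀ φ₀ Δ₀ hA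
        exact ⟨Γ₀, Δ₀.lock (𝟙 _), by simp [hA], CxEq.refl _, by simp⟩
  | lock_comp Γ μ ν =>
      constructor
      · intro n₀ m₀ Γ₀ μ₀ φ₀ Δ₀ hA
        cases Δ₀ with
        | nil => rw [Cx.append_nil] at hA; cases hA
        | ext Δ₁ ρ χ => rw [Cx.append_ext] at hA; cases hA
        | lock Δ₁ ρ =>
            rw [Cx.append_lock] at hA
            injection hA with h1 h2 h3 h4
            subst h2
            cases eq_of_heq h4
            replace h3 := eq_of_heq h3
            cases Δ₁ with
            | nil => rw [Cx.append_nil] at h3; cases h3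
            | ext Δ₂ ρ₂ χ₂ => rw [Cx.append_ext] at h3; cases h3
            | lock Δ₂ ρ₂ =>
                rw [Cx.append_lock] at h3
                injection h3 with g1 g2 g3 g4
                subst g2
                cases eq_of_heq g4
                cases eq_of_heq g3
                exact ⟨Γ₀, Δ₂.lock (ν ≫ μ), by simp, CxEq.refl _, by simp⟩
      · intro n₀ m₀ Γ₀ μ₀ φ₀ Δ₀ hA
        cases Δ₀ with
        | nil => rw [Cx.append_nil] at hA; cases hA
        | ext Δ₁ ρ χ => rw [Cx.append_ext] at hA; cases hA
        | lock Δ₁ ρ =>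
            rw [Cx.append_lock] at hA
            injection hA with h1 h2 h3 h4
            subst h2
            cases eq_of_heq h4
            cases eq_of_heq h3
            exact ⟨Γ₀, (Δ₁.lock μ).lock ν, by simp, CxEq.refl _, by simp⟩

end Decomp

namespace Cx

theorem nil_append : ∀ {m p : Md} (Δ : Cx Md m p), (Cx.nil).append Δ = Δ
  | _, _, .nil => by simp
  | _, _, .ext Δ μ φ => by simp [nil_append Δ]
  | _, _, .lock Δ μ => by simp [nil_append Δ]

theorem ext_append {a m p n : Md} (Γ : Cx Md a m) (μ : n ⟶ m) (φ : Fm Md n)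
    (Δ : Cx Md m p) : (Γ.ext μ φ).append Δ = Γ.append ((Cx.nil.ext μ φ).append Δ) := by
  rw [← append_assoc]
  simp

end Cx

theorem exchange_aux [Bicategory.Strict Md] {a q : Md} {Θ : Cx Md a q} {C : Fm Md q}
    (h : Der Θ C) :
    ∀ {m n n' : Md} (Γ : Cx Md a m) (μ : n ⟶ m) (φ : Fm Md n) (ν : n' ⟶ m)
      (ψ : Fm Md n') (Δ : Cx Md m q),
      CxEq Θ (((Γ.ext μ φ).ext ν ψ).append Δ) →
      Der (((Γ.ext ν ψ).ext μ φ).append Δ) C := by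
  induction h with
  | var Γc μc φc Δc α =>
      intro m n n' Γ μ φ ν ψ Δ hcx
      obtain ⟨Γ', Δ', hT, -, hl⟩ := (decomp hcx).1 Γc μc φc Δc rfl
      rcases Cx.split (Γ'.ext μc φc) ((Γ.ext μ φ).ext ν ψ) Δ' Δ hT.symm with
        ⟨Z, hZ1, hZ2⟩ | ⟨Z, hZ1, hZ2⟩
      · cases Z with
        | nil =>
            rw [Cx.append_nil] at hZ1
            rw [Cx.nil_append] at hZ2
            injection hZ1 with h1 h2 h3 h4 h5
            subst h1
            cases eq_of_heq h4; cases eq_of_heq h5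
            subst hZ2
            have α' : μc ⟶ ((Cx.nil.ext μ φ).append Δ).locks := by
              simpa [Cx.locks_append, hl] using α
            rw [Cx.ext_append (Γ.ext μc φc)]
            exact Der.var Γ μc φc _ α'
        | ext Z₁ ρ χ =>
            rw [Cx.append_ext] at hZ1
            injection hZ1 with h1 h2 h3 h4 h5
            subst h1
            cases eq_of_heq h4; cases eq_of_heq h5
            subst hZ2
            have α' : μc ⟶ Δ'.locks := hl ▸ α
            have hv := Der.var (((Γ.ext ν ψ).ext μ φ).append Z₁) μc φc Δ' α'
            rw [← Cx.append_ext, Cx.append_assoc] at hv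
            exact hv
        | lock Z₁ ρ =>
            rw [Cx.append_lock] at hZ1
            cases hZ1
      · cases Z with
        | nil =>
            rw [Cx.append_nil] at hZ1
            rw [Cx.nil_append] at hZ2
            injection hZ1 with h1 h2 h3 h4 h5
            subst h1
            cases eq_of_heq h4; cases eq_of_heq h5
            subst hZ2
            cases h3
            have α' : ν ⟶ ((Cx.nil.ext μ φ).append Δ').locks := by
              simpa [Cx.locks_append, hl] using α
            rw [Cx.ext_append (Γ.ext ν ψ)]
            exact Der.var Γ ν ψ _ α'
        | ext Z₁ ρ χ =>
            rw [Cx.append_ext] at hZ1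
            injection hZ1 with h1 h2 h3 h4 h5
            subst h1
            cases eq_of_heq h4; cases eq_of_heq h5
            cases Z₁ with
            | nil =>
                rw [Cx.append_nil] at h3
                injection h3 with g1 g2 g3 g4 g5
                subst g1
                cases eq_of_heq g4; cases eq_of_heq g5
                cases g3
                subst hZ2
                have α' : μ ⟶ Δ.locks := by
                  simpa [Cx.locks_append, hl] using α
                exact Der.var (Γ'.ext ν ψ) μ φ Δ α'
            | ext Z₂ ρ₂ χ₂ =>
                rw [Cx.append_ext] at h3
                injection h3 with g1 g2 g3 g4 g5
                subst g1
                cases eq_of_heq g4; cases eq_of_heq g5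
                subst g3
                subst hZ2
                have α' : μc ⟶ (((Z₂.ext ν ψ).ext μ φ).append Δ).locks := by
                  simpa [Cx.locks_append, hl] using α
                have hv := Der.var Γ' μc φc (((Z₂.ext ν ψ).ext μ φ).append Δ) α'
                rw [← Cx.append_assoc] at hv
                rw [Cx.append_ext, Cx.append_ext] at hv
                exact hv
            | lock Z₂ ρ₂ =>
                rw [Cx.append_lock] at h3
                cases h3
        | lock Z₁ ρ =>
            rw [Cx.append_lock] at hZ1
            cases hZ1
  | truI _ =>
      intro m n n' Γ μ φ ν ψ Δ hcx
      exact Der.truI _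
  | flsE _ ih =>
      intro m n n' Γ μ φ ν ψ Δ hcx
      exact .flsE (ih Γ μ φ ν ψ Δ hcx)
  | conjI _ _ ih1 ih2 =>
      intro m n n' Γ μ φ ν ψ Δ hcx
      exact .conjI (ih1 Γ μ φ ν ψ Δ hcx) (ih2 Γ μ φ ν ψ Δ hcx)
  | conjE₁ _ ih =>
      intro m n n' Γ μ φ ν ψ Δ hcx
      exact .conjE₁ (ih Γ μ φ ν ψ Δ hcx)
  | conjE₂ _ ih =>
      intro m n n' Γ μ φ ν ψ Δ hcx
      exact .conjE₂ (ih Γ μ φ ν ψ Δ hcx)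
  | disjI₁ _ ih =>
      intro m n n' Γ μ φ ν ψ Δ hcx
      exact .disjI₁ (ih Γ μ φ ν ψ Δ hcx)
  | disjI₂ _ ih =>
      intro m n n' Γ μ φ ν ψ Δ hcx
      exact .disjI₂ (ih Γ μ φ ν ψ Δ hcx)
  | disjE _ _ _ ih1 ih2 ih3 =>
      intro m n n' Γ μ φ ν ψ Δ hcx
      refine .disjE (ih1 Γ μ φ ν ψ Δ hcx) ?_ ?_
      · rw [← Cx.append_ext]
        exact ih2 Γ μ φ ν ψ (Δ.ext (𝟙 _) _) (by rw [Cx.append_ext]; exact .ext _ _ hcx)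
      · rw [← Cx.append_ext]
        exact ih3 Γ μ φ ν ψ (Δ.ext (𝟙 _) _) (by rw [Cx.append_ext]; exact .ext _ _ hcx)
  | implI _ ih =>
      intro m n n' Γ μ φ ν ψ Δ hcx
      refine .implI ?_
      rw [← Cx.append_ext]
      exact ih Γ μ φ ν ψ (Δ.ext _ _) (by rw [Cx.append_ext]; exact .ext _ _ hcx)
  | implE _ _ ih1 ih2 =>
      intro m n n' Γ μ φ ν ψ Δ hcx
      refine .implE (ih1 Γ μ φ ν ψ Δ hcx) ?_
      rw [← Cx.append_lock]
      exact ih2 Γ μ φ ν ψ (Δ.lock _) (by rw [Cx.append_lock]; exact .lock _ hcx)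
  | modI _ ih =>
      intro m n n' Γ μ φ ν ψ Δ hcx
      refine .modI ?_
      rw [← Cx.append_lock]
      exact ih Γ μ φ ν ψ (Δ.lock _) (by rw [Cx.append_lock]; exact .lock _ hcx)
  | @modE o2 n2 m2 Γx νx μx φx ψx _ _ ih1 ih2 =>
      intro m n n' Γ μ φ ν ψ Δ hcx
      refine Der.modE (ν := νx) (μ := μx) (φ := φx) ?_ ?_
      · rw [← Cx.append_lock]
        exact ih1 Γ μ φ ν ψ (Δ.lock _) (by rw [Cx.append_lock]; exact .lock _ hcx)
      · rw [← Cx.append_ext]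
        exact ih2 Γ μ φ ν ψ (Δ.ext _ _) (by rw [Cx.append_ext]; exact .ext _ _ hcx)
  | conv hce _ ih =>
      intro m n n' Γ μ φ ν ψ Δ hcx
      exact ih Γ μ φ ν ψ Δ (hce.trans hcx)


/-- **Exchange** is admissible: if `Γ, φ@μ, ψ@ν, Δ ⊢ C @ p` then
`Γ, ψ@ν, φ@μ, Δ ⊢ C @ p`. -/
theorem Der.exchange {Md : Type u} [Bicategory.{w, v, u} Md] [Bicategory.Strict Md]
    {a m n n' p : Md} (Γ : Cx Md a m) (μ : n ⟶ m) (φ : Fm Md n) (ν : n' ⟶ m)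
    (ψ : Fm Md n') (Δ : Cx Md m p) (C : Fm Md p)
    (h : Der (((Γ.ext μ φ).ext ν ψ).append Δ) C) :
    Der (((Γ.ext ν ψ).ext μ φ).append Δ) C :=
  exchange_aux h Γ μ φ ν ψ Δ (CxEq.refl _)
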